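/- Under the layer-wise setup, let f : E → ℝ be differentiable, layer-wise L-smooth, and bounded below with f* := inf f > −∞. Let X₁, …, X_{T+1} ∈ E be generated by X_{t+1}^ℓ = X_t^ℓ + η_t^ℓ·O_t^ℓ for t = 1,…,T, where η_t^ℓ ≥ 0, ‖O_t^ℓ‖_{(ℓ)} ≤ 1, and ⟨B_t^ℓ, O_t^ℓ⟩ = −‖B_t^ℓ‖_{(ℓ)*} for some B_t^ℓ ∈ E_ℓ. Then Σ_{t=1}^{T} Σ_{ℓ=1}^{p} η_t^ℓ·‖∇_ℓ f(X_t)‖_{(ℓ)*} ≤ f(X₁) − f* + Σ_{t=1}^{T} Σ_{ℓ=1}^{p} ( 2·η_t^ℓ·‖B_t^ℓ − ∇_ℓ f(X_t)‖_{(ℓ)*} + (L_ℓ/2)·(η_t^ℓ)² ). -/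

import Mathlib

open scoped RealInnerProductSpace

/-- The dual norm of a (semi)norm `N` on a real inner product space:
`‖Y‖_* = sup { ⟪Y, X⟫ : N X ≤ 1 }`. -/
noncomputable def dualNorm {E : Type*} [NormedAddCommGroup E] [InnerProductSpace ℝ E]
    (N : E → ℝ) (Y : E) : ℝ :=
  sSup ((fun X => ⟪Y, X⟫) '' {X | N X ≤ 1})

section Helpers

variable {F : Type*} [NormedAddCommGroup F] [InnerProductSpace ℝ F] [FiniteDimensional ℝ F]

lemma seminorm_exists_bound (N : Seminorm ℝ F) : ∃ C, 0 < C ∧ ∀ x : F, N x ≤ C * ‖x‖ := by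
  classical
  let b := Module.finBasis ℝ F
  refine ⟨(∑ i, N (b i) * ‖LinearMap.toContinuousLinearMap (b.coord i)‖) + 1,
    by positivity, fun x => ?_⟩
  have h1 : N x ≤ ∑ i, N (b.repr x i • b i) := by
    conv_lhs => rw [← b.sum_repr x]
    exact Finset.le_sum_of_subadditive N (map_zero N).le (fun a c => map_add_le_add N a c) _ _
  have h2 : ∀ i, N (b.repr x i • b i) ≤ N (b i) * ‖LinearMap.toContinuousLinearMap (b.coord i)‖ * ‖x‖ := by
    intro i
    rw [map_smul_eq_mul]
    have := (LinearMap.toContinuousLinearMap (b.coord i)).le_opNorm x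
    have hx : ‖b.repr x i‖ ≤ ‖LinearMap.toContinuousLinearMap (b.coord i)‖ * ‖x‖ := by
      simpa [Module.Basis.coord_apply] using this
    rw [Real.norm_eq_abs] at hx
    calc |b.repr x i| * N (b i) ≤ (‖LinearMap.toContinuousLinearMap (b.coord i)‖ * ‖x‖) * N (b i) :=
          mul_le_mul_of_nonneg_right hx (apply_nonneg _ _)
      _ = N (b i) * ‖LinearMap.toContinuousLinearMap (b.coord i)‖ * ‖x‖ := by ring
  calc N x ≤ ∑ i, N (b.repr x i • b i) := h1
    _ ≤ ∑ i, N (b i) * ‖LinearMap.toContinuousLinearMap (b.coord i)‖ * ‖x‖ :=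
        Finset.sum_le_sum fun i _ => h2 i
    _ = (∑ i, N (b i) * ‖LinearMap.toContinuousLinearMap (b.coord i)‖) * ‖x‖ := by
        rw [Finset.sum_mul]
    _ ≤ ((∑ i, N (b i) * ‖LinearMap.toContinuousLinearMap (b.coord i)‖) + 1) * ‖x‖ := by
        have : (0:ℝ) ≤ ‖x‖ := norm_nonneg x
        nlinarith

lemma seminorm_continuous (N : Seminorm ℝ F) : Continuous N := by
  obtain ⟨C, hC0, hC⟩ := seminorm_exists_bound N
  apply (LipschitzWith.of_dist_le_mul (K := ⟨C, hC0.le⟩) (fun x y => ?_)).continuous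
  rw [Real.dist_eq, dist_eq_norm]
  have h1 : N x - N y ≤ N (x - y) := by
    have := map_add_le_add N (x - y) y; simpa using this
  have h2 : N y - N x ≤ N (x - y) := by
    have := map_add_le_add N (y - x) x
    have h3 : N (y - x) = N (x - y) := by rw [← map_neg_eq_map N, neg_sub]
    simp only [sub_add_cancel] at this
    linarith
  have := hC (x - y)
  rw [abs_sub_le_iff]
  constructor <;> · show _ ≤ C * ‖x - y‖; linarith

lemma seminorm_exists_lb (N : Seminorm ℝ F) (hN : ∀ x, N x = 0 → x = 0) :
    ∃ c, 0 < c ∧ ∀ x : F, c * ‖x‖ ≤ N x := by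
  rcases subsingleton_or_nontrivial F with h | h
  · exact ⟨1, one_pos, fun x => by
      have : x = 0 := Subsingleton.elim x 0
      simp [this]⟩
  · have hsph : (Metric.sphere (0:F) 1).Nonempty := NormedSpace.sphere_nonempty.mpr one_pos.le
    obtain ⟨x₀, hx₀, hmin⟩ := (isCompact_sphere (0:F) 1).exists_isMinOn hsph
      (seminorm_continuous N).continuousOn
    have hx₀norm : ‖x₀‖ = 1 := by simpa using hx₀
    have hc : 0 < N x₀ := by
      rcases lt_or_eq_of_le (apply_nonneg N x₀) with h' | h'
      · exact h'
      · exfalso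
        have := hN x₀ h'.symm
        rw [this] at hx₀norm; simp at hx₀norm
    refine ⟨N x₀, hc, fun x => ?_⟩
    rcases eq_or_ne x 0 with rfl | hx
    · simp
    · have hxn : (0:ℝ) < ‖x‖ := norm_pos_iff.mpr hx
      have hu : ‖(‖x‖⁻¹ • x)‖ = 1 := by
        rw [norm_smul, norm_inv, norm_norm, inv_mul_cancel₀ hxn.ne']
      have := isMinOn_iff.mp hmin _ (Metric.mem_sphere.mpr (by rw [dist_zero_right, hu]))
      rw [map_smul_eq_mul, Real.norm_eq_abs, abs_of_nonneg (inv_nonneg.mpr hxn.le)] at this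
      calc N x₀ * ‖x‖ ≤ (‖x‖⁻¹ * N x) * ‖x‖ := by
            exact mul_le_mul_of_nonneg_right this hxn.le
        _ = N x := by
            rw [mul_comm (‖x‖⁻¹) (N x), mul_assoc, inv_mul_cancel₀ hxn.ne', mul_one]

lemma dualNorm_bddAbove (N : Seminorm ℝ F) (hN : ∀ x, N x = 0 → x = 0) (Y : F) :
    BddAbove ((fun X => ⟪Y, X⟫) '' {X | N X ≤ 1}) := by
  obtain ⟨c, hc0, hc⟩ := seminorm_exists_lb N hN
  refine ⟨‖Y‖ * c⁻¹, fun r hr => ?_⟩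
  obtain ⟨X, hX, rfl⟩ := hr
  have hXnorm : ‖X‖ ≤ c⁻¹ := by
    have h1 : c * ‖X‖ ≤ 1 := (hc X).trans hX
    calc ‖X‖ = c⁻¹ * (c * ‖X‖) := by rw [← mul_assoc, inv_mul_cancel₀ hc0.ne', one_mul]
      _ ≤ c⁻¹ * 1 := mul_le_mul_of_nonneg_left h1 (inv_nonneg.mpr hc0.le)
      _ = c⁻¹ := mul_one _
  calc ⟪Y, X⟫ ≤ ‖Y‖ * ‖X‖ := real_inner_le_norm Y X
    _ ≤ ‖Y‖ * c⁻¹ := by gcongr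

lemma dualNorm_nonneg (N : Seminorm ℝ F) (hN : ∀ x, N x = 0 → x = 0) (Y : F) :
    0 ≤ dualNorm N Y := by
  have h0 : (0:ℝ) ∈ (fun X => ⟪Y, X⟫) '' {X | N X ≤ 1} :=
    ⟨0, by simp, by simp⟩
  exact le_csSup (dualNorm_bddAbove N hN Y) h0

lemma inner_le_dualNorm (N : Seminorm ℝ F) (hN : ∀ x, N x = 0 → x = 0) (Y X : F) :
    ⟪Y, X⟫ ≤ dualNorm N Y * N X := by
  rcases eq_or_lt_of_le (apply_nonneg N X) with h | h
  · have : X = 0 := hN X h.symm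
    simp [this]
  · have hmem : ((N X)⁻¹ • X) ∈ {X | N X ≤ 1} := by
      simp only [Set.mem_setOf_eq, map_smul_eq_mul, Real.norm_eq_abs,
        abs_of_nonneg (inv_nonneg.mpr h.le)]
      rw [inv_mul_cancel₀ h.ne']
    have hle : ⟪Y, (N X)⁻¹ • X⟫ ≤ dualNorm N Y :=
      le_csSup (dualNorm_bddAbove N hN Y) ⟨_, hmem, rfl⟩
    rw [real_inner_smul_right] at hle
    calc ⟪Y, X⟫ = ((N X)⁻¹ * ⟪Y, X⟫) * N X := by field_simp
      _ ≤ dualNorm N Y * N X := mul_le_mul_of_nonneg_right hle h.le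

lemma dualNorm_add_le (N : Seminorm ℝ F) (hN : ∀ x, N x = 0 → x = 0) (Y Z : F) :
    dualNorm N (Y + Z) ≤ dualNorm N Y + dualNorm N Z := by
  have hne : ((fun X => ⟪Y + Z, X⟫) '' {X | N X ≤ 1}).Nonempty :=
    ⟨⟪Y + Z, (0:F)⟫, ⟨0, by simp, rfl⟩⟩
  show sSup ((fun X => ⟪Y + Z, X⟫) '' {X | N X ≤ 1}) ≤ dualNorm N Y + dualNorm N Z
  refine csSup_le hne ?_
  rintro r ⟨X, hX, rfl⟩
  have h1 : ⟪Y, X⟫ ≤ dualNorm N Y := le_csSup (dualNorm_bddAbove N hN Y) ⟨X, hX, rfl⟩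
  have h2 : ⟪Z, X⟫ ≤ dualNorm N Z := le_csSup (dualNorm_bddAbove N hN Z) ⟨X, hX, rfl⟩
  simp only [inner_add_left]
  linarith

lemma dualNorm_neg (N : Seminorm ℝ F) (Y : F) : dualNorm N (-Y) = dualNorm N Y := by
  unfold dualNorm
  congr 1
  ext r
  constructor
  · rintro ⟨X, hX, rfl⟩
    exact ⟨-X, by simpa [map_neg_eq_map] using hX, by simp [inner_neg_left, inner_neg_right]⟩
  · rintro ⟨X, hX, rfl⟩
    exact ⟨-X, by simpa [map_neg_eq_map] using hX, by simp [inner_neg_left, inner_neg_right]⟩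

end Helpers

section Descent

variable {p : ℕ} {E : Fin p → Type*}
  [∀ ℓ, NormedAddCommGroup (E ℓ)] [∀ ℓ, InnerProductSpace ℝ (E ℓ)]
  [∀ ℓ, FiniteDimensional ℝ (E ℓ)]

lemma descent_step (N : ∀ ℓ, Seminorm ℝ (E ℓ)) (hNdef : ∀ ℓ x, N ℓ x = 0 → x = 0)
    (f : PiLp 2 E → ℝ) (hf : Differentiable ℝ f) (L : Fin p → ℝ)
    (hsmooth : ∀ ℓ (X Y : PiLp 2 E),
      dualNorm (N ℓ) (gradient f X ℓ - gradient f Y ℓ) ≤ L ℓ * N ℓ (X ℓ - Y ℓ))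
    (X Δ : PiLp 2 E) :
    f (X + Δ) ≤ f X + ⟪gradient f X, Δ⟫ + ∑ ℓ, L ℓ / 2 * (N ℓ (Δ ℓ))^2 := by
  set G : ℝ := ⟪gradient f X, Δ⟫ with hG
  set C : ℝ := ∑ ℓ, L ℓ * (N ℓ (Δ ℓ))^2 with hC
  set h : ℝ → ℝ := fun s => f (X + s • Δ) - (s * G + s^2 * (C/2)) with hh
  have hline : ∀ s : ℝ, HasDerivAt (fun s : ℝ => X + s • Δ) Δ s := by
    intro s
    have := ((hasDerivAt_id s).smul_const Δ).const_add X
    simpa using this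
  have hcomp : ∀ s : ℝ, HasDerivAt (fun s : ℝ => f (X + s • Δ))
      ⟪gradient f (X + s • Δ), Δ⟫ s := by
    intro s
    have hg := (hf (X + s • Δ)).hasGradientAt
    have := hg.hasFDerivAt.comp_hasDerivAt s (hline s)
    simpa [InnerProductSpace.toDual_apply_apply, Function.comp_def] using this
  have hders : ∀ s : ℝ, HasDerivAt h (⟪gradient f (X + s • Δ), Δ⟫ - G - s * C) s := by
    intro s
    have h2 : HasDerivAt (fun s : ℝ => s * G + s^2 * (C/2))
        (G + (↑2 * s ^ 1) * (C/2)) s :=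
      (hasDerivAt_mul_const G).add ((hasDerivAt_pow 2 s).mul_const (C/2))
    have := (hcomp s).sub h2
    have heq : ⟪gradient f (X + s • Δ), Δ⟫ - (G + (↑2 * s ^ 1) * (C/2))
        = ⟪gradient f (X + s • Δ), Δ⟫ - G - s * C := by push_cast; ring
    rwa [heq] at this
  have hderiv_nonpos : ∀ s : ℝ, 0 ≤ s →
      ⟪gradient f (X + s • Δ), Δ⟫ - G - s * C ≤ 0 := by
    intro s hs
    have hkey : ⟪gradient f (X + s • Δ), Δ⟫ - G ≤ s * C := by
      have hsub : ⟪gradient f (X + s • Δ), Δ⟫ - G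
          = ⟪gradient f (X + s • Δ) - gradient f X, Δ⟫ := by
        rw [hG, inner_sub_left]
      rw [hsub]
      rw [PiLp.inner_apply]
      rw [hC, Finset.mul_sum]
      apply Finset.sum_le_sum
      intro ℓ _
      have hpair := inner_le_dualNorm (N ℓ) (hNdef ℓ)
        ((gradient f (X + s • Δ) - gradient f X) ℓ) (Δ ℓ)
      have hsm := hsmooth ℓ (X + s • Δ) X
      have happ : (gradient f (X + s • Δ) - gradient f X) ℓ
          = gradient f (X + s • Δ) ℓ - gradient f X ℓ := rfl
      have hXapp : (X + s • Δ) ℓ - X ℓ = s • Δ ℓ := by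
        simp [PiLp.add_apply, PiLp.smul_apply]
      have hNs : N ℓ (s • Δ ℓ) = s * N ℓ (Δ ℓ) := by
        rw [map_smul_eq_mul, Real.norm_eq_abs, abs_of_nonneg hs]
      calc ⟪(gradient f (X + s • Δ) - gradient f X) ℓ, Δ ℓ⟫
          ≤ dualNorm (N ℓ) ((gradient f (X + s • Δ) - gradient f X) ℓ) * N ℓ (Δ ℓ) := hpair
        _ ≤ (L ℓ * N ℓ ((X + s • Δ) ℓ - X ℓ)) * N ℓ (Δ ℓ) := by
            apply mul_le_mul_of_nonneg_right _ (apply_nonneg _ _)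
            rw [happ]; exact hsm
        _ = s * (L ℓ * (N ℓ (Δ ℓ))^2) := by rw [hXapp, hNs]; ring
    linarith
  have hanti : AntitoneOn h (Set.Icc 0 1) := by
    apply antitoneOn_of_deriv_nonpos (convex_Icc 0 1)
    · exact fun x _ => ((hders x).differentiableAt.continuousAt).continuousWithinAt
    · exact fun x _ => (hders x).differentiableAt.differentiableWithinAt
    · intro x hx
      rw [interior_Icc] at hx
      rw [(hders x).deriv]
      exact hderiv_nonpos x hx.1.le
  have h10 : h 1 ≤ h 0 := hanti (by norm_num) (by norm_num) zero_le_one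
  have h0 : h 0 = f X := by simp [hh]
  have h1 : h 1 = f (X + Δ) - (G + C/2) := by simp [hh]
  have hC2 : C / 2 = ∑ ℓ, L ℓ / 2 * (N ℓ (Δ ℓ))^2 := by
    rw [hC, Finset.sum_div]
    apply Finset.sum_congr rfl
    intro ℓ _; ring
  rw [h0, h1] at h10
  linarith [hC2 ▸ h10]

end Descent

/-- Telescoped descent lemma for LMO-based layer-wise updates over
`t = 1, …, T`, for an objective bounded below with infimum `f* = sInf (range f)`. -/
theorem stmt_2 {p : ℕ} {E : Fin p → Type*}
    [∀ ℓ, NormedAddCommGroup (E ℓ)] [∀ ℓ, InnerProductSpace ℝ (E ℓ)]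
    [∀ ℓ, FiniteDimensional ℝ (E ℓ)]
    (N : ∀ ℓ, Seminorm ℝ (E ℓ)) (hNdef : ∀ ℓ x, N ℓ x = 0 → x = 0)
    (f : PiLp 2 E → ℝ) (hf : Differentiable ℝ f)
    (hbdd : BddBelow (Set.range f))
    (L : Fin p → ℝ) (hL : ∀ ℓ, 0 ≤ L ℓ)
    (hsmooth : ∀ ℓ (X Y : PiLp 2 E),
      dualNorm (N ℓ) (gradient f X ℓ - gradient f Y ℓ) ≤ L ℓ * N ℓ (X ℓ - Y ℓ))
    (T : ℕ)
    (X : ℕ → PiLp 2 E) (B O : ℕ → ∀ ℓ, E ℓ) (η : ℕ → Fin p → ℝ)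
    (hη : ∀ t ℓ, 0 ≤ η t ℓ)
    (hO_ball : ∀ t, 1 ≤ t → t ≤ T → ∀ ℓ, N ℓ (O t ℓ) ≤ 1)
    (hO_lmo : ∀ t, 1 ≤ t → t ≤ T → ∀ ℓ, ⟪B t ℓ, O t ℓ⟫ = -dualNorm (N ℓ) (B t ℓ))
    (hupd : ∀ t, 1 ≤ t → t ≤ T → ∀ ℓ, X (t + 1) ℓ = X t ℓ + η t ℓ • O t ℓ) :
    ∑ t ∈ Finset.Icc 1 T, ∑ ℓ, η t ℓ * dualNorm (N ℓ) (gradient f (X t) ℓ)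
      ≤ f (X 1) - sInf (Set.range f)
        + ∑ t ∈ Finset.Icc 1 T, ∑ ℓ,
            (2 * η t ℓ * dualNorm (N ℓ) (B t ℓ - gradient f (X t) ℓ)
              + L ℓ / 2 * (η t ℓ) ^ 2) := by
  -- per-step inequality
  have key : ∀ t, 1 ≤ t → t ≤ T →
      ∑ ℓ, η t ℓ * dualNorm (N ℓ) (gradient f (X t) ℓ)
        ≤ f (X t) - f (X (t+1))
          + ∑ ℓ, (2 * η t ℓ * dualNorm (N ℓ) (B t ℓ - gradient f (X t) ℓ)
              + L ℓ / 2 * (η t ℓ) ^ 2) := by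
    intro t ht1 ht2
    set Δ : PiLp 2 E := X (t+1) - X t with hΔdef
    have hΔ : ∀ ℓ, Δ ℓ = η t ℓ • O t ℓ := by
      intro ℓ
      rw [hΔdef]
      show X (t+1) ℓ - X t ℓ = η t ℓ • O t ℓ
      rw [hupd t ht1 ht2 ℓ]; abel
    have hXadd : X t + Δ = X (t+1) := by rw [hΔdef]; abel
    have hdesc := descent_step N hNdef f hf L hsmooth (X t) Δ
    rw [hXadd] at hdesc
    -- bound the inner product term
    have hinner : ⟪gradient f (X t), Δ⟫
        ≤ ∑ ℓ, (- (η t ℓ * dualNorm (N ℓ) (gradient f (X t) ℓ))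
            + 2 * η t ℓ * dualNorm (N ℓ) (B t ℓ - gradient f (X t) ℓ)) := by
      rw [PiLp.inner_apply]
      apply Finset.sum_le_sum
      intro ℓ _
      set g := gradient f (X t) ℓ with hg
      set b := B t ℓ with hb
      set o := O t ℓ with ho
      have hD : dualNorm (N ℓ) (g - b) = dualNorm (N ℓ) (b - g) := by
        rw [← dualNorm_neg (N ℓ) (b - g)]; simp
      have hgo : ⟪g, o⟫ = ⟪b, o⟫ + ⟪g - b, o⟫ := by
        rw [inner_sub_left]; ring
      have hlmo : ⟪b, o⟫ = -dualNorm (N ℓ) b := hO_lmo t ht1 ht2 ℓ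
      have hgb : ⟪g - b, o⟫ ≤ dualNorm (N ℓ) (g - b) := by
        have := inner_le_dualNorm (N ℓ) (hNdef ℓ) (g - b) o
        have hno := hO_ball t ht1 ht2 ℓ
        have hnn := dualNorm_nonneg (N ℓ) (hNdef ℓ) (g - b)
        calc ⟪g - b, o⟫ ≤ dualNorm (N ℓ) (g - b) * N ℓ o := this
          _ ≤ dualNorm (N ℓ) (g - b) * 1 := by
              exact mul_le_mul_of_nonneg_left hno hnn
          _ = dualNorm (N ℓ) (g - b) := mul_one _
      have htri : dualNorm (N ℓ) g ≤ dualNorm (N ℓ) b + dualNorm (N ℓ) (g - b) := by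
        have := dualNorm_add_le (N ℓ) (hNdef ℓ) b (g - b)
        simpa using this
      have hstep : ⟪g, o⟫ ≤ -dualNorm (N ℓ) g + 2 * dualNorm (N ℓ) (g - b) := by
        rw [hgo, hlmo]; linarith
      rw [hΔ ℓ, real_inner_smul_right]
      have := mul_le_mul_of_nonneg_left hstep (hη t ℓ)
      calc η t ℓ * ⟪g, o⟫
          ≤ η t ℓ * (-dualNorm (N ℓ) g + 2 * dualNorm (N ℓ) (g - b)) := this
        _ = - (η t ℓ * dualNorm (N ℓ) g) + 2 * η t ℓ * dualNorm (N ℓ) (g - b) := by ring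
        _ = - (η t ℓ * dualNorm (N ℓ) g) + 2 * η t ℓ * dualNorm (N ℓ) (b - g) := by
            rw [hD]
    -- bound the quadratic term
    have hquad : ∑ ℓ, L ℓ / 2 * (N ℓ (Δ ℓ))^2 ≤ ∑ ℓ, L ℓ / 2 * (η t ℓ)^2 := by
      apply Finset.sum_le_sum
      intro ℓ _
      apply mul_le_mul_of_nonneg_left _ (by linarith [hL ℓ])
      rw [hΔ ℓ, map_smul_eq_mul, Real.norm_eq_abs, abs_of_nonneg (hη t ℓ)]
      have hno := hO_ball t ht1 ht2 ℓ
      have hnn := apply_nonneg (N ℓ) (O t ℓ)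
      have hN2 : (N ℓ) (O t ℓ) ^ 2 ≤ 1 := by nlinarith
      calc (η t ℓ * (N ℓ) (O t ℓ))^2 = (η t ℓ)^2 * ((N ℓ) (O t ℓ))^2 := by ring
        _ ≤ (η t ℓ)^2 * 1 := mul_le_mul_of_nonneg_left hN2 (sq_nonneg _)
        _ = (η t ℓ)^2 := mul_one _
    have hsum1 : ∑ ℓ, (- (η t ℓ * dualNorm (N ℓ) (gradient f (X t) ℓ))
            + 2 * η t ℓ * dualNorm (N ℓ) (B t ℓ - gradient f (X t) ℓ))
        = - ∑ ℓ, η t ℓ * dualNorm (N ℓ) (gradient f (X t) ℓ)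
          + ∑ ℓ, 2 * η t ℓ * dualNorm (N ℓ) (B t ℓ - gradient f (X t) ℓ) := by
      rw [Finset.sum_add_distrib, Finset.sum_neg_distrib]
    have hsum2 : ∑ ℓ, (2 * η t ℓ * dualNorm (N ℓ) (B t ℓ - gradient f (X t) ℓ)
              + L ℓ / 2 * (η t ℓ) ^ 2)
        = ∑ ℓ, 2 * η t ℓ * dualNorm (N ℓ) (B t ℓ - gradient f (X t) ℓ)
          + ∑ ℓ, L ℓ / 2 * (η t ℓ) ^ 2 := Finset.sum_add_distrib
    rw [hsum2]
    rw [hsum1] at hinner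
    linarith
  -- telescoping by induction
  have main : ∀ S, S ≤ T →
      ∑ t ∈ Finset.Icc 1 S, ∑ ℓ, η t ℓ * dualNorm (N ℓ) (gradient f (X t) ℓ)
        ≤ f (X 1) - f (X (S+1))
          + ∑ t ∈ Finset.Icc 1 S, ∑ ℓ,
              (2 * η t ℓ * dualNorm (N ℓ) (B t ℓ - gradient f (X t) ℓ)
                + L ℓ / 2 * (η t ℓ) ^ 2) := by
    intro S
    induction S with
    | zero => intro _; simp
    | succ S ih =>
      intro hS
      have hS' : S ≤ T := Nat.le_of_succ_le hS
      have hIH := ih hS'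
      have hkey := key (S+1) (Nat.le_add_left 1 S) hS
      rw [Finset.sum_Icc_succ_top (Nat.le_add_left 1 S),
          Finset.sum_Icc_succ_top (Nat.le_add_left 1 S)]
      linarith
  have hfin := main T le_rfl
  have hinf : sInf (Set.range f) ≤ f (X (T+1)) := csInf_le hbdd (Set.mem_range_self _)
  linarith
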